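/- Let R be a unital associative superalgebra over a ring k with 2 invertible, and n ≥ 2. Then the special queer Lie superalgebra sq_n(R) := [q_n(R), q_n(R)] is a perfect Lie superalgebra, i.e., [sq_n(R), sq_n(R)] = sq_n(R). -/

import Mathlib

set_option linter.unusedSectionVars false
set_option linter.unusedVariables false
set_option maxRecDepth 8000
set_option synthInstance.maxHeartbeats 1000000
set_option maxHeartbeats 1000000


variable {k : Type} [CommRing k] [Invertible (2 : k)]
variable {R : Type} [Ring R] [Algebra k R]

/-- The multiplication of the graded tensor product `R ⊗ Q1`, in the model where
`(a, b)` represents `a ⊗ 1 + b ⊗ ν` (with `ν` odd, `ν² = 1`, Koszul signs via the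
grading involution `σ` of `R`). -/
def mulQ (σ : R ≃ₐ[k] R) (p q : R × R) : R × R :=
  (p.1 * q.1 + p.2 * σ q.2, p.1 * q.2 + p.2 * σ q.1)

/-- The grading involution of `R ⊗ Q1` in the model above. -/
def tauQ (σ : R ≃ₐ[k] R) (p : R × R) : R × R := (σ p.1, -σ p.2)

/-- The grading involution of `R ⊗ Q1` as a `k`-linear map. -/
def tauL (σ : R ≃ₐ[k] R) : (R × R) →ₗ[k] (R × R) :=
  LinearMap.prod (σ.toLinearMap ∘ₗ LinearMap.fst k R R)
    (-(σ.toLinearMap ∘ₗ LinearMap.snd k R R))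

/-- The queer Lie superalgebra `q_n(A)` coordinatized by a superalgebra `A` with grading
involution `s`: block matrices `[[A,B],[ρ(B),ρ(A)]]` inside `gl_{n|n}(A)`, where `ρ = s`
entrywise (so `ρ(a) = (-1)^{|a|} a` on homogeneous elements). -/
def qSub (n : ℕ) (A : Type) [AddCommGroup A] [Module k A] (s : A →ₗ[k] A) :
    Submodule k (Matrix (Fin n ⊕ Fin n) (Fin n ⊕ Fin n) A) where
  carrier := {M | (∀ i j, M (Sum.inr i) (Sum.inr j) = s (M (Sum.inl i) (Sum.inl j))) ∧
                  (∀ i j, M (Sum.inr i) (Sum.inl j) = s (M (Sum.inl i) (Sum.inr j)))}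
  add_mem' := by
    intro M N hM hN
    exact ⟨fun i j => by simp [Matrix.add_apply, hM.1 i j, hN.1 i j],
           fun i j => by simp [Matrix.add_apply, hM.2 i j, hN.2 i j]⟩
  zero_mem' := ⟨fun i j => by simp, fun i j => by simp⟩
  smul_mem' := by
    intro c M hM
    exact ⟨fun i j => by simp [Matrix.smul_apply, hM.1 i j],
           fun i j => by simp [Matrix.smul_apply, hM.2 i j]⟩

/-- The grading involution of `gl_{n|n}(A)`: the parity of `e_{ij}(a)` is `|i| + |j| + |a|`,
so the involution applies `s` entrywise with a sign `-1` on the off-diagonal blocks. -/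
def gInvMat {n : ℕ} {A : Type} [Neg A] (s : A → A)
    (M : Matrix (Fin n ⊕ Fin n) (Fin n ⊕ Fin n) A) :
    Matrix (Fin n ⊕ Fin n) (Fin n ⊕ Fin n) A :=
  Matrix.of fun i j => if i.isLeft = j.isLeft then s (M i j) else -(s (M i j))

/-- The set of graded commutators `[x,y] = xy - (-1)^{|x||y|} yx` of homogeneous elements of
a submodule `V` of `gl_{n|n}(A)` (homogeneity w.r.t. the grading involution `gInvMat s`). -/
def gBrSet (n : ℕ) {A : Type} [Ring A] [Module k A]
    (s : A → A) (V : Submodule k (Matrix (Fin n ⊕ Fin n) (Fin n ⊕ Fin n) A)) :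
    Set (Matrix (Fin n ⊕ Fin n) (Fin n ⊕ Fin n) A) :=
  {z | ∃ x ∈ V, ∃ y ∈ V, ∃ px py : ZMod 2,
    gInvMat s x = ((-1 : ℤ) ^ px.val) • x ∧ gInvMat s y = ((-1 : ℤ) ^ py.val) • y ∧
    z = x * y - ((-1 : ℤ) ^ (px * py).val) • (y * x)}

/-- The derived sub-superalgebra `[V, V]`: the span of graded commutators of homogeneous
elements of `V`. -/
def derivedSub (n : ℕ) {A : Type} [Ring A] [Module k A]
    (s : A → A) (V : Submodule k (Matrix (Fin n ⊕ Fin n) (Fin n ⊕ Fin n) A)) :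
    Submodule k (Matrix (Fin n ⊕ Fin n) (Fin n ⊕ Fin n) A) :=
  Submodule.span k (gBrSet n s V)

/-! ### Auxiliary material -/

open Matrix Sum

section Aux

/-- parity contribution of the odd/even type of an elementary matrix -/
def tb (t : Bool) : ZMod 2 := if t then 1 else 0

lemma sgn_add : ∀ p q : ZMod 2, ((-1 : ℤ)) ^ ((p + q).val) = (-1) ^ p.val * (-1) ^ q.val := by
  decide

lemma sgn_neg : ∀ p : ZMod 2, -((-1 : ℤ) ^ p.val) = (-1) ^ ((p + 1).val) := by decide

def cIx {n : ℕ} (t : Bool) (j : Fin n) : Fin n ⊕ Fin n := if t then Sum.inr j else Sum.inl j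

/-- elementary matrices of `q_n(R)` -/
def Em (σ : R ≃ₐ[k] R) {n : ℕ} (i j : Fin n) (t : Bool) (a : R) :
    Matrix (Fin n ⊕ Fin n) (Fin n ⊕ Fin n) R :=
  Matrix.single (inl i) (cIx t j) a + Matrix.single (inr i) (cIx (!t) j) (σ a)

lemma sbm_mul {n : ℕ} (p q r s : Fin n ⊕ Fin n) (a b : R) :
    Matrix.single p q a * Matrix.single r s b =
      if q = r then Matrix.single p s (a * b) else 0 := by
  split
  · next h => subst h; exact Matrix.single_mul_single_same ..
  · next h => exact Matrix.single_mul_single_of_ne (h := h) ..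

lemma Em_mul (σ : R ≃ₐ[k] R) (hσ : ∀ a, σ (σ a) = a) {n : ℕ} (i j K l : Fin n)
    (t t' : Bool) (a b : R) :
    Em σ i j t a * Em σ K l t' b =
      if j = K then Em σ i l (t != t') (a * (if t then σ b else b)) else 0 := by
  unfold Em cIx
  cases t <;> cases t' <;> by_cases h : j = K <;>
    simp [h, sbm_mul, add_mul, mul_add, _root_.map_mul, hσ] <;> abel

lemma Em_mem_q (σ : R ≃ₐ[k] R) {n : ℕ} (i j : Fin n)
    (t : Bool) (a : R) : Em σ i j t a ∈ qSub n R σ.toLinearMap := by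
  constructor <;> intro i' j' <;>
    cases t <;>
    simp only [Em, cIx, Bool.not_true, Bool.not_false, if_true, if_false,
      Matrix.add_apply, Matrix.single, of_apply, AlgEquiv.toLinearMap_apply] <;>
    by_cases h1 : i = i' <;> by_cases h2 : j = j' <;>
    simp [h1, h2]

lemma Em_smul (σ : R ≃ₐ[k] R) {n : ℕ} (i j : Fin n) (t : Bool) (c : ℤ) (a : R) :
    Em σ i j t (c • a) = c • Em σ i j t a := by
  simp [Em, smul_single, smul_add]

lemma gInv_Em (σ : R ≃ₐ[k] R) {n : ℕ} (i j : Fin n) (t : Bool) (a : R) :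
    gInvMat (⇑σ) (Em σ i j t a) =
      ((-1 : ℤ) ^ (if t then 1 else 0 : ℕ)) • Em σ i j t (σ a) := by
  ext i' j'
  cases t <;>
  · simp only [gInvMat, Em, cIx, Bool.not_true, Bool.not_false, if_true, if_false,
      of_apply, Matrix.add_apply, Matrix.single, Matrix.smul_apply, pow_zero, pow_one,
      one_smul, neg_smul]
    rcases i' with i' | i' <;> rcases j' with j' | j' <;>
      by_cases h1 : i = i' <;> by_cases h2 : j = j' <;> simp [h1, h2]

lemma Em_hom (σ : R ≃ₐ[k] R) {n : ℕ} (i j : Fin n) (t : Bool) (a : R) (pa : ZMod 2)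
    (ha : σ a = ((-1 : ℤ) ^ pa.val) • a) :
    gInvMat (⇑σ) (Em σ i j t a) = ((-1 : ℤ) ^ ((pa + tb t).val)) • Em σ i j t a := by
  rw [gInv_Em, ha, Em_smul, smul_smul]
  congr 1
  have : (if t then 1 else 0 : ℕ) = (tb t).val := by cases t <;> rfl
  rw [this, mul_comm, sgn_add]

lemma hom_tw (σ : R ≃ₐ[k] R) (t : Bool) (b : R) (pb : ZMod 2)
    (hb : σ b = ((-1 : ℤ) ^ pb.val) • b) :
    σ (if t then σ b else b) = ((-1 : ℤ) ^ pb.val) • (if t then σ b else b) := by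
  cases t
  · simpa using hb
  · simp only [if_true]
    conv_lhs => rw [hb]
    rw [map_zsmul]

lemma hom_mul (σ : R ≃ₐ[k] R) (a b : R) (pa pb : ZMod 2)
    (ha : σ a = ((-1 : ℤ) ^ pa.val) • a) (hb : σ b = ((-1 : ℤ) ^ pb.val) • b) :
    σ (a * b) = ((-1 : ℤ) ^ ((pa + pb).val)) • (a * b) := by
  rw [_root_.map_mul, ha, hb, smul_mul_assoc, mul_smul_comm, smul_smul, sgn_add]

lemma hom_one (σ : R ≃ₐ[k] R) :
    σ (1 : R) = ((-1 : ℤ) ^ ((0 : ZMod 2)).val) • (1 : R) := by simp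

end Aux
section Aux2

-- q is closed under multiplication
lemma q_mul_mem (σ : R ≃ₐ[k] R) (hσ : ∀ a, σ (σ a) = a) {n : ℕ}
    {x y : Matrix (Fin n ⊕ Fin n) (Fin n ⊕ Fin n) R}
    (hx : x ∈ qSub n R σ.toLinearMap) (hy : y ∈ qSub n R σ.toLinearMap) :
    x * y ∈ qSub n R σ.toLinearMap := by
  obtain ⟨hx1, hx2⟩ := hx
  obtain ⟨hy1, hy2⟩ := hy
  simp only [AlgEquiv.toLinearMap_apply] at hx1 hx2 hy1 hy2
  have hy2' : ∀ i j, y (inl i) (inr j) = σ (y (inr i) (inl j)) := by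
    intro i j; rw [hy2]; exact (hσ _).symm
  have hy1' : ∀ i j, y (inl i) (inl j) = σ (y (inr i) (inr j)) := by
    intro i j; rw [hy1]; exact (hσ _).symm
  have mm : ∀ a b : R, σ a * σ b = σ (a * b) := fun a b => (_root_.map_mul σ a b).symm
  constructor <;> intro i j
  · simp only [Matrix.mul_apply, AlgEquiv.toLinearMap_apply]
    rw [Fintype.sum_sum_type, Fintype.sum_sum_type, _root_.map_add, _root_.map_sum,
      _root_.map_sum]
    simp only [hx1, hx2, hy1, hy2', mm]
    abel
  · simp only [Matrix.mul_apply, AlgEquiv.toLinearMap_apply]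
    rw [Fintype.sum_sum_type, Fintype.sum_sum_type, _root_.map_add, _root_.map_sum,
      _root_.map_sum]
    simp only [hx1, hx2, hy1', hy2, mm]
    abel

-- decomposition of an element of q into elementary matrices
lemma q_decomp (σ : R ≃ₐ[k] R) {n : ℕ}
    {x : Matrix (Fin n ⊕ Fin n) (Fin n ⊕ Fin n) R} (hx : x ∈ qSub n R σ.toLinearMap) :
    x = ∑ i : Fin n, ∑ j : Fin n,
      (Em σ i j false (x (inl i) (inl j)) + Em σ i j true (x (inl i) (inr j))) := by
  obtain ⟨hx1, hx2⟩ := hx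
  simp only [AlgEquiv.toLinearMap_apply] at hx1 hx2
  ext p q
  rcases p with p | p <;> rcases q with q | q <;>
    simp [Matrix.sum_apply, Em, cIx, Matrix.single, Matrix.add_apply, of_apply,
      Finset.sum_ite_eq, Finset.sum_ite_eq', hx1, hx2, ite_and]

-- easy direction ingredients
lemma gBr_subset_q (σ : R ≃ₐ[k] R) (hσ : ∀ a, σ (σ a) = a) {n : ℕ} :
    gBrSet n (⇑σ) (qSub n R σ.toLinearMap) ⊆ (qSub n R σ.toLinearMap : Set _) := by
  rintro z ⟨x, hx, y, hy, px, py, _, _, rfl⟩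
  exact sub_mem (q_mul_mem σ hσ hx hy) (zsmul_mem (q_mul_mem σ hσ hy hx) _)

lemma gBr_mono {n : ℕ} (σ : R ≃ₐ[k] R)
    {V W : Submodule k (Matrix (Fin n ⊕ Fin n) (Fin n ⊕ Fin n) R)} (h : V ≤ W) :
    gBrSet n (⇑σ) V ⊆ gBrSet n (⇑σ) W := by
  rintro z ⟨x, hx, y, hy, px, py, h1, h2, rfl⟩
  exact ⟨x, h hx, y, h hy, px, py, h1, h2, rfl⟩

-- an off-diagonal elementary matrix with homogeneous coefficient lies in sq = [q,q]
lemma offdiag_mem_D (σ : R ≃ₐ[k] R) (hσ : ∀ a, σ (σ a) = a) {n : ℕ} {i l : Fin n}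
    (hil : i ≠ l) (t : Bool) (a : R) (pa : ZMod 2)
    (ha : σ a = ((-1 : ℤ) ^ pa.val) • a) :
    Em σ i l t a ∈ derivedSub n (⇑σ) (qSub n R σ.toLinearMap) := by
  apply Submodule.subset_span
  refine ⟨Em σ i l t a, Em_mem_q σ i l t a, Em σ l l false 1, Em_mem_q σ l l false 1,
    pa + tb t, 0, Em_hom σ i l t a pa ha, Em_hom σ l l false 1 0 (hom_one σ), ?_⟩
  rw [Em_mul σ hσ, Em_mul σ hσ]
  simp [hil, Ne.symm hil, ite_self]

-- the "coweight" h = E_ll(1) - E_ii(1) lies in sq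
lemma Hmat_mem_D (σ : R ≃ₐ[k] R) (hσ : ∀ a, σ (σ a) = a) {n : ℕ} {i l : Fin n}
    (hil : i ≠ l) :
    Em σ l l false 1 - Em σ i i false 1 ∈ derivedSub n (⇑σ) (qSub n R σ.toLinearMap) := by
  apply Submodule.subset_span
  refine ⟨Em σ l i false 1, Em_mem_q σ l i false 1, Em σ i l false 1, Em_mem_q σ i l false 1,
    0, 0, Em_hom σ l i false 1 0 (hom_one σ), Em_hom σ i l false 1 0 (hom_one σ), ?_⟩
  rw [Em_mul σ hσ, Em_mul σ hσ]
  simp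

end Aux2
section Aux3

-- an off-diagonal elementary matrix lies in [sq, sq]
lemma offdiag_mem_DD (σ : R ≃ₐ[k] R) (hσ : ∀ a, σ (σ a) = a) {n : ℕ} {i l : Fin n}
    (hil : i ≠ l) (t : Bool) (a : R) (pa : ZMod 2)
    (ha : σ a = ((-1 : ℤ) ^ pa.val) • a) :
    Em σ i l t a ∈
      derivedSub n (⇑σ) (derivedSub n (⇑σ) (qSub n R σ.toLinearMap)) := by
  set D := derivedSub n (⇑σ) (qSub n R σ.toLinearMap) with hD
  have hH : Em σ l l false 1 - Em σ i i false 1 ∈ D := Hmat_mem_D σ hσ hil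
  have hHhom : gInvMat (⇑σ) (Em σ l l false 1 - Em σ i i false 1) =
      ((-1 : ℤ) ^ ((0 : ZMod 2)).val) • (Em σ l l false 1 - Em σ i i false 1) := by
    have : ∀ M N : Matrix (Fin n ⊕ Fin n) (Fin n ⊕ Fin n) R,
        gInvMat (⇑σ) (M - N) = gInvMat (⇑σ) M - gInvMat (⇑σ) N := by
      intro M N; ext p q
      simp only [gInvMat, of_apply, Matrix.sub_apply, map_sub]
      split <;> abel
    rw [this, Em_hom σ l l false 1 0 (hom_one σ), Em_hom σ i i false 1 0 (hom_one σ)]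
    simp [tb, smul_sub]
  have hz : Em σ i l t a * (Em σ l l false 1 - Em σ i i false 1) -
      ((-1 : ℤ) ^ (((pa + tb t) * 0).val)) •
        ((Em σ l l false 1 - Em σ i i false 1) * Em σ i l t a) ∈
      gBrSet n (⇑σ) D :=
    ⟨_, offdiag_mem_D σ hσ hil t a pa ha, _, hH, pa + tb t, 0,
      Em_hom σ i l t a pa ha, hHhom, rfl⟩
  have he : Em σ i l t a * (Em σ l l false 1 - Em σ i i false 1) -
      ((-1 : ℤ) ^ (((pa + tb t) * 0).val)) •
        ((Em σ l l false 1 - Em σ i i false 1) * Em σ i l t a) =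
      (2 : k) • Em σ i l t a := by
    rw [mul_sub, sub_mul, Em_mul σ hσ, Em_mul σ hσ, Em_mul σ hσ, Em_mul σ hσ]
    simp [hil, Ne.symm hil, ite_self, two_smul]
    try abel
  have : Em σ i l t a = (⅟(2 : k)) • ((2 : k) • Em σ i l t a) := by
    rw [invOf_smul_smul]
  rw [this, ← he]
  exact Submodule.smul_mem _ _ (Submodule.subset_span hz)

end Aux3
section Aux4

lemma bne_comm' (t t' : Bool) : (t' != t) = (t != t') := by cases t <;> cases t' <;> rfl

lemma exists_ne_fin {n : ℕ} (hn : 2 ≤ n) (i : Fin n) : ∃ m : Fin n, m ≠ i := by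
  rcases eq_or_ne i ⟨0, by omega⟩ with h | h
  · exact ⟨⟨1, by omega⟩, by rw [h]; intro hc; simpa using congrArg Fin.val hc⟩
  · exact ⟨⟨0, by omega⟩, fun hc => h hc.symm⟩

lemma elem_br (σ : R ≃ₐ[k] R) (hσ : ∀ a, σ (σ a) = a) {n : ℕ} (hn : 2 ≤ n)
    (i j K l : Fin n) (t t' : Bool) (a b : R) (pa pb : ZMod 2)
    (ha : σ a = ((-1 : ℤ) ^ pa.val) • a) (hb : σ b = ((-1 : ℤ) ^ pb.val) • b)
    (e : ZMod 2) (he : e = (pa + tb t) * (pb + tb t')) :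
    Em σ i j t a * Em σ K l t' b - ((-1 : ℤ) ^ e.val) • (Em σ K l t' b * Em σ i j t a) ∈
      derivedSub n (⇑σ) (derivedSub n (⇑σ) (qSub n R σ.toLinearMap)) := by
  by_cases h1 : j = K
  · subst h1
    by_cases h2 : l = i
    · subst h2
      by_cases h3 : l = j
      · -- fully diagonal case
        subst h3
        obtain ⟨m, hm⟩ := exists_ne_fin hn l
        have hγ : σ (b * (if t' then σ a else a)) =
            ((-1 : ℤ) ^ ((pb + pa).val)) • (b * (if t' then σ a else a)) :=
          hom_mul σ b _ pb pa hb (hom_tw σ t' a pa ha)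
        have hz1 : Em σ l m t a * Em σ m l t' b -
            ((-1 : ℤ) ^ e.val) • (Em σ m l t' b * Em σ l m t a) ∈
            gBrSet n (⇑σ) (derivedSub n (⇑σ) (qSub n R σ.toLinearMap)) :=
          ⟨_, offdiag_mem_D σ hσ (Ne.symm hm) t a pa ha,
           _, offdiag_mem_D σ hσ hm t' b pb hb, pa + tb t, pb + tb t',
           Em_hom σ l m t a pa ha, Em_hom σ m l t' b pb hb, by rw [he]⟩
        have hz2 : Em σ m l (t != t') (b * (if t' then σ a else a)) * Em σ l m false 1 -
            ((-1 : ℤ) ^ (((pb + pa + tb (t != t')) * (0 + tb false)).val)) •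
              (Em σ l m false 1 * Em σ m l (t != t') (b * (if t' then σ a else a))) ∈
            gBrSet n (⇑σ) (derivedSub n (⇑σ) (qSub n R σ.toLinearMap)) :=
          ⟨_, offdiag_mem_D σ hσ hm (t != t') _ (pb + pa) hγ,
           _, offdiag_mem_D σ hσ (Ne.symm hm) false 1 0 (hom_one σ),
           pb + pa + tb (t != t'), 0 + tb false,
           Em_hom σ m l (t != t') _ (pb + pa) hγ, Em_hom σ l m false 1 0 (hom_one σ), rfl⟩
        have eq1 : Em σ l m t a * Em σ m l t' b -
            ((-1 : ℤ) ^ e.val) • (Em σ m l t' b * Em σ l m t a) =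
            Em σ l l (t != t') (a * (if t then σ b else b)) -
              ((-1 : ℤ) ^ e.val) • Em σ m m (t != t') (b * (if t' then σ a else a)) := by
          rw [Em_mul σ hσ, Em_mul σ hσ, bne_comm']
          simp
        have eq2 : Em σ m l (t != t') (b * (if t' then σ a else a)) * Em σ l m false 1 -
            ((-1 : ℤ) ^ (((pb + pa + tb (t != t')) * (0 + tb false)).val)) •
              (Em σ l m false 1 * Em σ m l (t != t') (b * (if t' then σ a else a))) =
            Em σ m m (t != t') (b * (if t' then σ a else a)) -
              Em σ l l (t != t') (b * (if t' then σ a else a)) := by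
          rw [Em_mul σ hσ, Em_mul σ hσ]
          simp [tb, ite_self]
        have goal_eq : Em σ l l t a * Em σ l l t' b -
            ((-1 : ℤ) ^ e.val) • (Em σ l l t' b * Em σ l l t a) =
            Em σ l l (t != t') (a * (if t then σ b else b)) -
              ((-1 : ℤ) ^ e.val) • Em σ l l (t != t') (b * (if t' then σ a else a)) := by
          rw [Em_mul σ hσ, Em_mul σ hσ, bne_comm']
          simp
        rw [goal_eq, show Em σ l l (t != t') (a * (if t then σ b else b)) -
              ((-1 : ℤ) ^ e.val) • Em σ l l (t != t') (b * (if t' then σ a else a)) =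
            (Em σ l m t a * Em σ m l t' b -
              ((-1 : ℤ) ^ e.val) • (Em σ m l t' b * Em σ l m t a)) +
            ((-1 : ℤ) ^ e.val) • (Em σ m l (t != t') (b * (if t' then σ a else a)) *
                Em σ l m false 1 -
              ((-1 : ℤ) ^ (((pb + pa + tb (t != t')) * (0 + tb false)).val)) •
                (Em σ l m false 1 * Em σ m l (t != t') (b * (if t' then σ a else a)))) by
          rw [eq1, eq2, smul_sub]; exact (sub_add_sub_cancel _ _ _).symm]
        exact add_mem (Submodule.subset_span hz1)
          (zsmul_mem (Submodule.subset_span hz2) _)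
      · -- a genuine bracket of off-diagonal elements
        apply Submodule.subset_span
        exact ⟨_, offdiag_mem_D σ hσ h3 t a pa ha,
          _, offdiag_mem_D σ hσ (fun h => h3 h.symm) t' b pb hb, pa + tb t, pb + tb t',
          Em_hom σ l j t a pa ha, Em_hom σ j l t' b pb hb, by rw [he]⟩
    · -- l ≠ i
      rw [Em_mul σ hσ, Em_mul σ hσ]
      simp only [if_pos rfl, if_neg h2, smul_zero, sub_zero]
      exact offdiag_mem_DD σ hσ (fun h => h2 h.symm) (t != t') _ (pa + pb)
        (hom_mul σ a _ pa pb ha (hom_tw σ t b pb hb))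
  · rw [Em_mul σ hσ, Em_mul σ hσ]
    by_cases h2 : l = i
    · simp only [if_neg h1, if_pos h2, zero_sub]
      apply neg_mem
      apply zsmul_mem
      exact offdiag_mem_DD σ hσ (fun h => h1 h.symm) (t' != t) _ (pb + pa)
        (hom_mul σ b _ pb pa hb (hom_tw σ t' a pa ha))
    · simp only [if_neg h1, if_neg h2, smul_zero, sub_zero]
      exact zero_mem _

end Aux4
section Main

def brM (c : ℤ) (n : ℕ) :
    Matrix (Fin n ⊕ Fin n) (Fin n ⊕ Fin n) R →ₗ[k]
      Matrix (Fin n ⊕ Fin n) (Fin n ⊕ Fin n) R →ₗ[k]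
        Matrix (Fin n ⊕ Fin n) (Fin n ⊕ Fin n) R :=
  LinearMap.mul k (Matrix (Fin n ⊕ Fin n) (Fin n ⊕ Fin n) R) -
    c • (LinearMap.mul k (Matrix (Fin n ⊕ Fin n) (Fin n ⊕ Fin n) R)).flip

lemma brM_apply (c : ℤ) (n : ℕ) (u v : Matrix (Fin n ⊕ Fin n) (Fin n ⊕ Fin n) R) :
    brM (k := k) c n u v = u * v - c • (v * u) := by
  simp [brM, LinearMap.mul_apply']

lemma bilin_sum_mem {M : Type} [AddCommGroup M] [Module k M]
    (B : M →ₗ[k] M →ₗ[k] M) {ι κ : Type} (s : Finset ι) (r : Finset κ)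
    (u : ι → M) (v : κ → M) (P : Submodule k M)
    (h : ∀ a ∈ s, ∀ b ∈ r, B (u a) (v b) ∈ P) :
    B (∑ a ∈ s, u a) (∑ b ∈ r, v b) ∈ P := by
  rw [map_sum B u s, LinearMap.sum_apply]
  refine Submodule.sum_mem _ fun a ha => ?_
  rw [map_sum]
  exact Submodule.sum_mem _ fun b hb => h a ha b hb

lemma sum_triple {n : ℕ} {M : Type} [AddCommMonoid M] (f : Fin n → Fin n → Bool → M) :
    ∑ p : Fin n × Fin n × Bool, f p.1 p.2.1 p.2.2 =
      ∑ i : Fin n, ∑ j : Fin n, (f i j false + f i j true) := by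
  rw [Fintype.sum_prod_type]
  refine Finset.sum_congr rfl fun i _ => ?_
  rw [Fintype.sum_prod_type]
  refine Finset.sum_congr rfl fun j _ => ?_
  rw [Fintype.sum_bool]
  exact add_comm _ _

lemma zpar1 : ∀ p q : ZMod 2, p * q = (p + tb false) * (q + tb false) := by decide
lemma zpar2 : ∀ p q : ZMod 2, p * q = (p + tb false) * ((q + 1) + tb true) := by decide
lemma zpar3 : ∀ p q : ZMod 2, p * q = ((p + 1) + tb true) * (q + tb false) := by decide
lemma zpar4 : ∀ p q : ZMod 2, p * q = ((p + 1) + tb true) * ((q + 1) + tb true) := by decide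

lemma br_span (σ : R ≃ₐ[k] R) (hσ : ∀ a, σ (σ a) = a) {n : ℕ} (hn : 2 ≤ n)
    {x y : Matrix (Fin n ⊕ Fin n) (Fin n ⊕ Fin n) R}
    (hx : x ∈ qSub n R σ.toLinearMap) (hy : y ∈ qSub n R σ.toLinearMap)
    (px py : ZMod 2)
    (hhx : gInvMat (⇑σ) x = ((-1 : ℤ) ^ px.val) • x)
    (hhy : gInvMat (⇑σ) y = ((-1 : ℤ) ^ py.val) • y) :
    x * y - ((-1 : ℤ) ^ ((px * py).val)) • (y * x) ∈
      derivedSub n (⇑σ) (derivedSub n (⇑σ) (qSub n R σ.toLinearMap)) := by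
  have hax1 : ∀ i j, σ (x (inl i) (inl j)) =
      ((-1 : ℤ) ^ px.val) • x (inl i) (inl j) := by
    intro i j
    have h2 := congrFun (congrFun hhx (inl i)) (inl j)
    simpa [gInvMat, Matrix.smul_apply] using h2
  have hax2 : ∀ i j, σ (x (inl i) (inr j)) =
      ((-1 : ℤ) ^ ((px + 1).val)) • x (inl i) (inr j) := by
    intro i j
    have h2 := congrFun (congrFun hhx (inl i)) (inr j)
    simp only [gInvMat, Matrix.of_apply, Sum.isLeft_inl, Sum.isLeft_inr,
      Matrix.smul_apply, Bool.true_eq_false, if_false] at h2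
    rw [← sgn_neg, neg_smul, ← h2, neg_neg]
  have hay1 : ∀ i j, σ (y (inl i) (inl j)) =
      ((-1 : ℤ) ^ py.val) • y (inl i) (inl j) := by
    intro i j
    have h2 := congrFun (congrFun hhy (inl i)) (inl j)
    simpa [gInvMat, Matrix.smul_apply] using h2
  have hay2 : ∀ i j, σ (y (inl i) (inr j)) =
      ((-1 : ℤ) ^ ((py + 1).val)) • y (inl i) (inr j) := by
    intro i j
    have h2 := congrFun (congrFun hhy (inl i)) (inr j)
    simp only [gInvMat, Matrix.of_apply, Sum.isLeft_inl, Sum.isLeft_inr,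
      Matrix.smul_apply, Bool.true_eq_false, if_false] at h2
    rw [← sgn_neg, neg_smul, ← h2, neg_neg]
  have hx' : x = ∑ p : Fin n × Fin n × Bool, Em σ p.1 p.2.1 p.2.2
      (cond p.2.2 (x (inl p.1) (inr p.2.1)) (x (inl p.1) (inl p.2.1))) := by
    rw [sum_triple (f := fun i j t => Em σ i j t
      (cond t (x (inl i) (inr j)) (x (inl i) (inl j))))]
    exact q_decomp σ hx
  have hy' : y = ∑ p : Fin n × Fin n × Bool, Em σ p.1 p.2.1 p.2.2
      (cond p.2.2 (y (inl p.1) (inr p.2.1)) (y (inl p.1) (inl p.2.1))) := by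
    rw [sum_triple (f := fun i j t => Em σ i j t
      (cond t (y (inl i) (inr j)) (y (inl i) (inl j))))]
    exact q_decomp σ hy
  rw [show x * y - ((-1 : ℤ) ^ ((px * py).val)) • (y * x) =
      brM (k := k) ((-1 : ℤ) ^ ((px * py).val)) n x y from (brM_apply _ _ _ _).symm]
  rw [hx', hy']
  refine bilin_sum_mem _ _ _ _ _ _ (fun p _ q _ => ?_)
  rw [brM_apply]
  obtain ⟨i, j, t⟩ := p
  obtain ⟨i', j', t'⟩ := q
  cases t <;> cases t'
  · exact elem_br σ hσ hn i j i' j' false false _ _ px py (hax1 i j) (hay1 i' j')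
      (px * py) (zpar1 px py)
  · exact elem_br σ hσ hn i j i' j' false true _ _ px (py + 1) (hax1 i j) (hay2 i' j')
      (px * py) (zpar2 px py)
  · exact elem_br σ hσ hn i j i' j' true false _ _ (px + 1) py (hax2 i j) (hay1 i' j')
      (px * py) (zpar3 px py)
  · exact elem_br σ hσ hn i j i' j' true true _ _ (px + 1) (py + 1) (hax2 i j) (hay2 i' j')
      (px * py) (zpar4 px py)

end Main

/-- For a unital associative superalgebra `R` over `k` (2 invertible) and `n ≥ 2`,
the special queer Lie superalgebra `sq_n(R) = [q_n(R), q_n(R)]` is perfect: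
`[sq_n(R), sq_n(R)] = sq_n(R)`. -/
theorem sq_perfect (σ : R ≃ₐ[k] R) (hσ : ∀ a, σ (σ a) = a) (n : ℕ) (hn : 2 ≤ n) :
    derivedSub n ⇑σ (derivedSub n ⇑σ (qSub n R σ.toLinearMap))
      = derivedSub n ⇑σ (qSub n R σ.toLinearMap) := by
  apply le_antisymm
  · exact Submodule.span_mono (gBr_mono σ (Submodule.span_le.mpr (gBr_subset_q σ hσ)))
  · apply Submodule.span_le.mpr
    rintro z ⟨x, hx, y, hy, px, py, hhx, hhy, rfl⟩
    exact br_span σ hσ hn hx hy px py hhx hhy
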